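/- arXiv:math/0402239 — 4 statements merged into one kernel-verified Lean document; each statement's English description precedes it below -/
import Mathlib

section
/- Let 1 ≤ p ≤ 2 and let z and w be complex numbers. Then |z+w|^p + |z−w|^p ≥ (|z|+|w|)^p + ||z|−|w||^p. -/
lemma aux_maj (f : ℝ → ℝ) (hf : ConcaveOn ℝ (Set.Ici 0) f) {u v S D : ℝ}
    (hD : 0 ≤ D) (huS : u ≤ S) (hvS : v ≤ S) (hsum : u + v = S + D) :
    f S + f D ≤ f u + f v := by
  have hDS : D ≤ S := by linarith
  have hS : (0:ℝ) ≤ S := le_trans hD hDS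
  rcases eq_or_lt_of_le hDS with h | h
  · have hu : u = S := by linarith
    have hv : v = D := by linarith
    rw [hu, hv]
  · set t : ℝ := (u - D) / (S - D) with ht
    have hSD : 0 < S - D := by linarith
    have ht0 : 0 ≤ t := div_nonneg (by linarith) hSD.le
    have ht1 : t ≤ 1 := by
      rw [div_le_one hSD]; linarith
    have hne : S - D ≠ 0 := ne_of_gt hSD
    have hu : t • S + (1 - t) • D = u := by
      rw [smul_eq_mul, smul_eq_mul, ht]
      field_simp
      ring
    have hv : (1 - t) • S + t • D = v := by
      rw [smul_eq_mul, smul_eq_mul, ht]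
      field_simp
      linear_combination (D - S) * hsum
    have h1 := hf.2 (Set.mem_Ici.2 hS) (Set.mem_Ici.2 hD) ht0 (by linarith : (0:ℝ) ≤ 1 - t)
      (by ring : t + (1 - t) = 1)
    have h2 := hf.2 (Set.mem_Ici.2 hS) (Set.mem_Ici.2 hD) (by linarith : (0:ℝ) ≤ 1 - t) ht0
      (by ring : 1 - t + t = 1)
    rw [hu] at h1
    rw [hv] at h2
    simp only [smul_eq_mul] at h1 h2
    nlinarith [h1, h2]

/-- For `1 ≤ p ≤ 2` and complex numbers `z`, `w`,
`|z+w|^p + |z−w|^p ≥ (|z|+|w|)^p + ||z|−|w||^p`. -/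
theorem complex_abs_pow_ineq_le_two (p : ℝ) (hp1 : 1 ≤ p) (hp2 : p ≤ 2) (z w : ℂ) :
    (‖z‖ + ‖w‖) ^ p + |‖z‖ - ‖w‖| ^ p ≤
      ‖z + w‖ ^ p + ‖z - w‖ ^ p := by
  set a := ‖z + w‖ with ha
  set b := ‖z - w‖ with hb
  set S := ‖z‖ + ‖w‖ with hS
  set D := |‖z‖ - ‖w‖| with hD
  have ha0 : 0 ≤ a := norm_nonneg _
  have hb0 : 0 ≤ b := norm_nonneg _
  have hD0 : 0 ≤ D := abs_nonneg _
  have hS0 : 0 ≤ S := by positivity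
  have haS : a ≤ S := norm_add_le z w
  have hbS : b ≤ S := by
    calc b ≤ ‖z‖ + ‖-w‖ := by simp only [hb, sub_eq_add_neg]; exact norm_add_le z (-w)
    _ = S := by simp [hS]
  have hpar : a ^ 2 + b ^ 2 = S ^ 2 + D ^ 2 := by
    have h1 : a ^ 2 = Complex.normSq (z + w) := Complex.sq_norm _
    have h2 : b ^ 2 = Complex.normSq (z - w) := Complex.sq_norm _
    have h3 : (‖z‖) ^ 2 = Complex.normSq z := Complex.sq_norm _
    have h4 : (‖w‖) ^ 2 = Complex.normSq w := Complex.sq_norm _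
    have hDsq : D ^ 2 = (‖z‖ - ‖w‖) ^ 2 := sq_abs _
    rw [h1, h2, hDsq, hS, Complex.normSq_add, Complex.normSq_sub]
    ring_nf
    nlinarith [h3, h4]
  -- rewrite x^p = (x^2)^(p/2)
  have key : ∀ x : ℝ, 0 ≤ x → x ^ p = (x ^ 2) ^ (p / 2) := by
    intro x hx
    rw [← Real.rpow_natCast x 2, ← Real.rpow_mul hx]
    congr 1
    push_cast
    ring
  rw [key a ha0, key b hb0, key S hS0, key D hD0]
  have hconc : ConcaveOn ℝ (Set.Ici 0) fun x : ℝ => x ^ (p / 2) :=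
    Real.concaveOn_rpow (by linarith) (by linarith)
  exact aux_maj _ hconc (by positivity)
    (by nlinarith) (by nlinarith) hpar
end

section
/- Let 2 ≤ p < ∞ and let z and w be complex numbers. Then |z+w|^p + |z−w|^p ≤ (|z|+|w|)^p + ||z|−|w||^p. -/
lemma g_deriv (q s : ℝ) (hq : 1 ≤ q) (t : ℝ) :
    HasDerivAt (fun t : ℝ => t ^ q + (s - t) ^ q)
      (q * t ^ (q - 1) - q * (s - t) ^ (q - 1)) t := by
  have h1 : HasDerivAt (fun t : ℝ => t ^ q) (q * t ^ (q - 1)) t :=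
    Real.hasDerivAt_rpow_const (Or.inr hq)
  have h2 : HasDerivAt (fun t : ℝ => (s - t) ^ q)
      (q * (s - t) ^ (q - 1) * (-1)) t := by
    have hst : HasDerivAt (fun t : ℝ => s - t) (-1) t := by
      simpa using (hasDerivAt_const t s).fun_sub (hasDerivAt_id t)
    exact (Real.hasDerivAt_rpow_const (x := s - t) (p := q) (Or.inr hq)).comp t hst
  simpa [mul_comm, sub_eq_add_neg, mul_neg] using h1.fun_add h2

lemma g_anti (q s : ℝ) (hq : 1 ≤ q) (hs : 0 ≤ s) :
    AntitoneOn (fun t : ℝ => t ^ q + (s - t) ^ q) (Set.Icc 0 (s / 2)) := by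
  apply antitoneOn_of_deriv_nonpos (convex_Icc _ _)
  · exact fun x _ => ((g_deriv q s hq x).continuousAt).continuousWithinAt
  · intro x _
    exact ((g_deriv q s hq x).differentiableAt).differentiableWithinAt
  · intro x hx
    rw [interior_Icc] at hx
    rw [(g_deriv q s hq x).deriv]
    have h1 : x ^ (q - 1) ≤ (s - x) ^ (q - 1) :=
      Real.rpow_le_rpow hx.1.le (by linarith [hx.2]) (by linarith)
    nlinarith

lemma key (q : ℝ) (hq : 1 ≤ q) (a b A B : ℝ) (hB : 0 ≤ B) (hBb : B ≤ b)
    (hba : b ≤ a) (hBA : B ≤ A) (hpar : a ^ 2 + b ^ 2 = A ^ 2 + B ^ 2) :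
    (a ^ 2) ^ q + (b ^ 2) ^ q ≤ (A ^ 2) ^ q + (B ^ 2) ^ q := by
  set s := a ^ 2 + b ^ 2 with hs
  have hb : 0 ≤ b := hB.trans hBb
  have ha : 0 ≤ a := hb.trans hba
  have hs0 : 0 ≤ s := by positivity
  have hmem1 : (B ^ 2 : ℝ) ∈ Set.Icc 0 (s / 2) := by
    constructor
    · positivity
    · nlinarith
  have hmem2 : (b ^ 2 : ℝ) ∈ Set.Icc 0 (s / 2) := by
    constructor
    · positivity
    · nlinarith
  have hle : (B ^ 2 : ℝ) ≤ b ^ 2 := by nlinarith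
  have := g_anti q s hq hs0 hmem1 hmem2 hle
  have e1 : s - b ^ 2 = a ^ 2 := by ring
  have e2 : s - B ^ 2 = A ^ 2 := by rw [hpar]; ring
  simp only [] at this
  rw [e1, e2] at this
  linarith

/-- For `2 ≤ p < ∞` and complex numbers `z`, `w`,
`|z+w|^p + |z−w|^p ≤ (|z|+|w|)^p + ||z|−|w||^p`. -/
theorem complex_abs_pow_ineq_ge_two (p : ℝ) (hp : 2 ≤ p) (z w : ℂ) :
    ‖z + w‖ ^ p + ‖z - w‖ ^ p ≤
      (‖z‖ + ‖w‖) ^ p + |‖z‖ - ‖w‖| ^ p := by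
  set a := ‖z + w‖
  set b := ‖z - w‖
  set A := ‖z‖ + ‖w‖
  set B := |‖z‖ - ‖w‖|
  have ha : 0 ≤ a := norm_nonneg _
  have hb : 0 ≤ b := norm_nonneg _
  have hA : 0 ≤ A := by positivity
  have hB : 0 ≤ B := abs_nonneg _
  have hpar : a ^ 2 + b ^ 2 = A ^ 2 + B ^ 2 := by
    have := parallelogram_law_with_norm ℝ z w
    have hB2 : B ^ 2 = (‖z‖ - ‖w‖) ^ 2 := sq_abs _
    simp only [a, b, A, hB2]
    nlinarith
  have hBa : B ≤ a := by
    have := abs_norm_sub_norm_le z (-w)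
    simpa [a, B, sub_neg_eq_add] using this
  have hBb : B ≤ b := by
    have := abs_norm_sub_norm_le z w
    simpa [b, B] using this
  have hBA : B ≤ A := by
    rcases abs_le.mp (le_refl B) with ⟨h1, h2⟩
    simp only [A, B] at *
    rcases abs_cases (‖z‖ - ‖w‖) with ⟨h, _⟩ | ⟨h, _⟩ <;> rw [h] <;>
      nlinarith [norm_nonneg z, norm_nonneg w]
  have hq : (1 : ℝ) ≤ p / 2 := by linarith
  have conv : ∀ x : ℝ, 0 ≤ x → (x ^ 2) ^ (p / 2) = x ^ p := by
    intro x hx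
    rw [← Real.rpow_natCast x 2, ← Real.rpow_mul hx]
    congr 1; ring
  rcases le_total b a with hba | hab
  · have := key (p / 2) hq a b A B hB hBb hba hBA hpar
    rw [conv a ha, conv b hb, conv A hA, conv B hB] at this
    linarith
  · have hpar' : b ^ 2 + a ^ 2 = A ^ 2 + B ^ 2 := by linarith
    have := key (p / 2) hq b a A B hB hBa hab hBA hpar'
    rw [conv a ha, conv b hb, conv A hA, conv B hB] at this
    linarith
end

section
/- Let a, b ≥ 0 be real numbers and let 1 ≤ p < 2. Then the function c(t) = (a² + b² + 2abt)^{p/2} + (a² + b² − 2abt)^{p/2} is concave on the interval [−1, 1]; for p > 2 it is convex on [−1, 1]. -/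
open Set

lemma aff_concave {p C c : ℝ} (hC : 0 ≤ C - |c|)
    (h : ConcaveOn ℝ (Set.Ici 0) fun x : ℝ => x ^ p) :
    ConcaveOn ℝ (Set.Icc (-1 : ℝ) 1) (fun t : ℝ => (C + c * t) ^ p) := by
  have := h.comp_affineMap (AffineMap.const ℝ ℝ C + c • AffineMap.id ℝ ℝ)
  have key : ConcaveOn ℝ ((AffineMap.const ℝ ℝ C + c • AffineMap.id ℝ ℝ) ⁻¹' Set.Ici 0)
      (fun t : ℝ => (C + c * t) ^ p) := this
  refine key.subset ?_ (convex_Icc _ _)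
  intro t ht
  simp only [Set.mem_preimage, AffineMap.coe_add, AffineMap.coe_const, Pi.add_apply,
    AffineMap.coe_smul, AffineMap.coe_id, Pi.smul_apply, id_eq, smul_eq_mul, Set.mem_Ici, Function.const_apply]
  have h1 : |c * t| ≤ |c| := by
    rw [abs_mul]
    calc |c| * |t| ≤ |c| * 1 := by
          apply mul_le_mul_of_nonneg_left _ (abs_nonneg c)
          exact abs_le.mpr ⟨ht.1, ht.2⟩
      _ = |c| := mul_one _
  have := neg_abs_le (c * t)
  linarith [abs_nonneg c]

lemma aff_convex {p C c : ℝ} (hC : 0 ≤ C - |c|)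
    (h : ConvexOn ℝ (Set.Ici 0) fun x : ℝ => x ^ p) :
    ConvexOn ℝ (Set.Icc (-1 : ℝ) 1) (fun t : ℝ => (C + c * t) ^ p) := by
  have := h.comp_affineMap (AffineMap.const ℝ ℝ C + c • AffineMap.id ℝ ℝ)
  have key : ConvexOn ℝ ((AffineMap.const ℝ ℝ C + c • AffineMap.id ℝ ℝ) ⁻¹' Set.Ici 0)
      (fun t : ℝ => (C + c * t) ^ p) := this
  refine key.subset ?_ (convex_Icc _ _)
  intro t ht
  simp only [Set.mem_preimage, AffineMap.coe_add, AffineMap.coe_const, Pi.add_apply,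
    AffineMap.coe_smul, AffineMap.coe_id, Pi.smul_apply, id_eq, smul_eq_mul, Set.mem_Ici, Function.const_apply]
  have h1 : |c * t| ≤ |c| := by
    rw [abs_mul]
    calc |c| * |t| ≤ |c| * 1 := by
          apply mul_le_mul_of_nonneg_left _ (abs_nonneg c)
          exact abs_le.mpr ⟨ht.1, ht.2⟩
      _ = |c| := mul_one _
  have := neg_abs_le (c * t)
  linarith [abs_nonneg c]

/-- For `a, b ≥ 0`, the function `c(t) = (a² + b² + 2abt)^{p/2} + (a² + b² − 2abt)^{p/2}`
is concave on `[−1, 1]` when `1 ≤ p < 2`, and convex on `[−1, 1]` when `p > 2`. -/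
theorem concave_convex_c (a b : ℝ) (ha : 0 ≤ a) (hb : 0 ≤ b) (p : ℝ) :
    (1 ≤ p → p < 2 →
      ConcaveOn ℝ (Set.Icc (-1 : ℝ) 1)
        (fun t : ℝ => (a ^ 2 + b ^ 2 + 2 * a * b * t) ^ (p / 2) +
          (a ^ 2 + b ^ 2 - 2 * a * b * t) ^ (p / 2))) ∧
    (2 < p →
      ConvexOn ℝ (Set.Icc (-1 : ℝ) 1)
        (fun t : ℝ => (a ^ 2 + b ^ 2 + 2 * a * b * t) ^ (p / 2) +
          (a ^ 2 + b ^ 2 - 2 * a * b * t) ^ (p / 2))) := by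
  have hab : (0:ℝ) ≤ 2 * a * b := by positivity
  have h1 : 0 ≤ a ^ 2 + b ^ 2 - |2 * a * b| := by
    rw [abs_of_nonneg hab]; nlinarith [sq_nonneg (a - b)]
  have h2 : 0 ≤ a ^ 2 + b ^ 2 - |-(2 * a * b)| := by rwa [abs_neg]
  constructor
  · intro hp1 hp2
    have hconc : ConcaveOn ℝ (Set.Ici 0) fun x : ℝ => x ^ (p / 2) :=
      Real.concaveOn_rpow (by linarith) (by linarith)
    have A := aff_concave h1 hconc
    have B := aff_concave h2 hconc
    have := A.add B
    convert this using 2 with t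
    · rfl
    simp only [Pi.add_apply]
    ring_nf
  · intro hp
    have hconv : ConvexOn ℝ (Set.Ici 0) fun x : ℝ => x ^ (p / 2) :=
      convexOn_rpow (by linarith)
    have A := aff_convex h1 hconv
    have B := aff_convex h2 hconv
    have := A.add B
    convert this using 2 with t
    · rfl
    simp only [Pi.add_apply]
    ring_nf
end

section
/- Let n ≥ 1 and let A and B be Hermitian n×n complex matrices such that A − |B| is positive definite, where |B| = (B*B)^{1/2}. Then for each k, the k-th largest singular value of A is strictly greater than the k-th largest singular value of B; equivalently, Σ↑(A) − Σ↑(B) is positive definite. -/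
open ComplexOrder

namespace Matrix.PosSemidef

/-- The positive semidefinite square root of a positive semidefinite matrix
(the definition of the older Mathlib, since removed). -/
noncomputable def sqrt {𝕜 : Type*} [RCLike 𝕜] {n : Type*} [Fintype n] [DecidableEq n]
    {A : Matrix n n 𝕜} (hA : A.PosSemidef) : Matrix n n 𝕜 :=
  (hA.1.eigenvectorUnitary : Matrix n n 𝕜) *
    Matrix.diagonal (((↑) : ℝ → 𝕜) ∘ (√·) ∘ hA.1.eigenvalues) *
    (star hA.1.eigenvectorUnitary : Matrix n n 𝕜)

theorem posSemidef_sqrt {𝕜 : Type*} [RCLike 𝕜] {n : Type*} [Fintype n] [DecidableEq n]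
    {A : Matrix n n 𝕜} (hA : A.PosSemidef) : hA.sqrt.PosSemidef := by
  unfold sqrt
  have hd : (Matrix.diagonal (((↑) : ℝ → 𝕜) ∘ (√·) ∘ hA.1.eigenvalues)).PosSemidef := by
    apply Matrix.PosSemidef.diagonal
    intro i
    simp only [Pi.zero_apply, Function.comp_apply]
    exact_mod_cast Real.sqrt_nonneg _
  convert hd.mul_mul_conjTranspose_same (hA.1.eigenvectorUnitary : Matrix n n 𝕜) using 2
  first
    | rfl
    | simp [Matrix.star_eq_conjTranspose]

end Matrix.PosSemidef

/-- `|A| = (AᴴA)^{1/2}`, the absolute value of a complex matrix. -/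
noncomputable def matAbs {n : ℕ} (A : Matrix (Fin n) (Fin n) ℂ) :
    Matrix (Fin n) (Fin n) ℂ :=
  (Matrix.posSemidef_conjTranspose_mul_self A).sqrt

/-- The real power `A^p` of a matrix, defined via the continuous functional calculus
(meaningful when `A` is Hermitian/positive semidefinite). -/
noncomputable def mpow {n : ℕ} (A : Matrix (Fin n) (Fin n) ℂ) (p : ℝ) :
    Matrix (Fin n) (Fin n) ℂ :=
  cfc (fun x : ℝ => x ^ p) A

/-- The singular values `σ₁(A) ≥ σ₂(A) ≥ … ≥ σₙ(A)` of `A`, i.e. the eigenvalues of `|A|`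
arranged in decreasing order. -/
noncomputable def singVals {n : ℕ} (A : Matrix (Fin n) (Fin n) ℂ) : Fin n → ℝ :=
  fun k =>
    ((Matrix.posSemidef_conjTranspose_mul_self A).posSemidef_sqrt.1.eigenvalues ∘
      Tuple.sort (Matrix.posSemidef_conjTranspose_mul_self A).posSemidef_sqrt.1.eigenvalues) k.rev

/-- `Σ↑(A)`: the diagonal matrix with diagonal entries `σ₁(A), …, σₙ(A)` in that order. -/
noncomputable def SigmaUp {n : ℕ} (A : Matrix (Fin n) (Fin n) ℂ) :
    Matrix (Fin n) (Fin n) ℂ :=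
  Matrix.diagonal fun k => (singVals A k : ℂ)

/-- `Σ↓(A)`: the diagonal matrix with diagonal entries `σₙ(A), …, σ₁(A)` in that order. -/
noncomputable def SigmaDown {n : ℕ} (A : Matrix (Fin n) (Fin n) ℂ) :
    Matrix (Fin n) (Fin n) ℂ :=
  Matrix.diagonal fun k => (singVals A k.rev : ℂ)

/-- `‖A‖_p^p = Tr(|A|^p)`, the `p`-th power of the Schatten `p`-norm. -/
noncomputable def schattenPow {n : ℕ} (p : ℝ) (A : Matrix (Fin n) (Fin n) ℂ) : ℝ :=
  (Matrix.trace (mpow (matAbs A) p)).re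


namespace SingValsAux

open scoped InnerProductSpace
open Matrix

variable {n : ℕ}

lemma toEuc_basis (M : Matrix (Fin n) (Fin n) ℂ) (hM : M.IsHermitian) (j : Fin n) :
    Matrix.toEuclideanLin M (hM.eigenvectorBasis j)
      = (hM.eigenvalues j : ℂ) • hM.eigenvectorBasis j := by
  apply (WithLp.equiv 2 _).injective
  simp [Matrix.toEuclideanLin_apply, hM.mulVec_eigenvectorBasis]

lemma quad_eq (M : Matrix (Fin n) (Fin n) ℂ) (hM : M.IsHermitian)
    (x : EuclideanSpace ℂ (Fin n)) :
    (star (WithLp.equiv 2 _ x) ⬝ᵥ (M *ᵥ (WithLp.equiv 2 _ x))).re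
      = ∑ j, hM.eigenvalues j * ‖hM.eigenvectorBasis.repr x j‖ ^ 2 := by
  have key : ⟪x, Matrix.toEuclideanLin M x⟫_ℂ
      = ∑ j, (hM.eigenvalues j : ℂ) * (‖hM.eigenvectorBasis.repr x j‖ ^ 2 : ℝ) := by
    nth_rewrite 2 [← hM.eigenvectorBasis.sum_repr x]
    rw [map_sum, inner_sum]
    refine Finset.sum_congr rfl fun j _ => ?_
    rw [_root_.map_smul, toEuc_basis M hM j, inner_smul_right, inner_smul_right,
      ← inner_conj_symm, OrthonormalBasis.repr_apply_apply]
    set c := ⟪hM.eigenvectorBasis j, x⟫_ℂ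
    rw [show c * (↑(hM.eigenvalues j) * (starRingEnd ℂ) c)
        = ↑(hM.eigenvalues j) * (c * (starRingEnd ℂ) c) from by ring,
      Complex.mul_conj']
    push_cast; ring
  have := congrArg Complex.re key
  rw [show ⟪x, Matrix.toEuclideanLin M x⟫_ℂ
      = star (WithLp.equiv 2 _ x) ⬝ᵥ (M *ᵥ (WithLp.equiv 2 _ x)) from by
        rw [EuclideanSpace.inner_eq_star_dotProduct, dotProduct_comm]; rfl] at this
  rw [this, Complex.re_sum]
  refine Finset.sum_congr rfl fun j _ => ?_
  rw [← Complex.ofReal_mul, Complex.ofReal_re]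

lemma norm_sq_eq (x : EuclideanSpace ℂ (Fin n)) (b : OrthonormalBasis (Fin n) ℂ (EuclideanSpace ℂ (Fin n))) :
    ‖x‖ ^ 2 = ∑ j, ‖b.repr x j‖ ^ 2 := by
  rw [← b.repr.norm_map x]
  rw [EuclideanSpace.norm_eq]
  rw [Real.sq_sqrt (by positivity)]


lemma repr_support (b : OrthonormalBasis (Fin n) ℂ (EuclideanSpace ℂ (Fin n)))
    (s : Finset (Fin n)) (x : EuclideanSpace ℂ (Fin n))
    (hx : x ∈ Submodule.span ℂ (b '' (s : Set (Fin n)))) {j : Fin n} (hj : j ∉ s) :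
    b.repr x j = 0 := by
  rw [OrthonormalBasis.repr_apply_apply]
  induction hx using Submodule.span_induction with
  | mem y hy =>
      obtain ⟨i, hi, rfl⟩ := hy
      exact b.orthonormal.2 (fun h => hj (h ▸ hi))
  | zero => simp
  | add y z _ _ hy hz => rw [inner_add_right, hy, hz, add_zero]
  | smul c y _ hy => rw [inner_smul_right, hy, mul_zero]

lemma finrank_span_basis_image (b : OrthonormalBasis (Fin n) ℂ (EuclideanSpace ℂ (Fin n)))
    (s : Finset (Fin n)) :
    Module.finrank ℂ (Submodule.span ℂ (b '' (s : Set (Fin n)))) = s.card := by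
  have li : LinearIndependent ℂ (fun i : (s : Set (Fin n)) => b i) := by
    have := b.toBasis.linearIndependent
    rw [OrthonormalBasis.coe_toBasis] at this
    exact this.comp _ Subtype.coe_injective
  have h := finrank_span_eq_card li
  rw [show Set.range (fun i : (s : Set (Fin n)) => b i) = b '' (s : Set (Fin n)) by
    ext y; simp [Set.mem_image]] at h
  rw [h]; simp

lemma exists_ne_zero_mem_inf (S T : Submodule ℂ (EuclideanSpace ℂ (Fin n)))
    (h : n < Module.finrank ℂ S + Module.finrank ℂ T) :
    ∃ x : EuclideanSpace ℂ (Fin n), x ≠ 0 ∧ x ∈ S ∧ x ∈ T := by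
  by_contra hc
  push_neg at hc
  have hbot : S ⊓ T = ⊥ := by
    rw [Submodule.eq_bot_iff]
    intro x hx
    by_contra hx0
    exact hx0 (by simpa using hc x hx0 hx.1 hx.2)
  have := Submodule.finrank_sup_add_finrank_inf_eq S T
  rw [hbot, finrank_bot, add_zero] at this
  have hle : Module.finrank ℂ ↥(S ⊔ T) ≤ n := by
    simpa using Submodule.finrank_le (S ⊔ T)
  omega


open ComplexOrder in
lemma sorted_eig_lt {A C : Matrix (Fin n) (Fin n) ℂ} (hA : A.IsHermitian) (hC : C.IsHermitian)
    (h : (A - C).PosDef) (k : Fin n) :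
    (hC.eigenvalues ∘ Tuple.sort hC.eigenvalues) k
      < (hA.eigenvalues ∘ Tuple.sort hA.eigenvalues) k := by
  classical
  set σ := Tuple.sort hC.eigenvalues
  set τ := Tuple.sort hA.eigenvalues
  set sC : Finset (Fin n) := (Finset.Ici k).image σ
  set sA : Finset (Fin n) := (Finset.Iic k).image τ
  have hcC : sC.card = n - k := by
    rw [Finset.card_image_of_injective _ σ.injective, Fin.card_Ici]
  have hcA : sA.card = k + 1 := by
    rw [Finset.card_image_of_injective _ τ.injective, Fin.card_Iic]
  set bC := hC.eigenvectorBasis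
  set bA := hA.eigenvectorBasis
  set S := Submodule.span ℂ (bC '' (sC : Set (Fin n)))
  set T := Submodule.span ℂ (bA '' (sA : Set (Fin n)))
  obtain ⟨x, hx0, hxS, hxT⟩ := exists_ne_zero_mem_inf S T (by
    rw [finrank_span_basis_image, finrank_span_basis_image, hcC, hcA]
    have := k.isLt; omega)
  have hnorm : 0 < ‖x‖ ^ 2 := by have := norm_pos_iff.mpr hx0; positivity
  -- lower bound for C
  have hCineq : (hC.eigenvalues ∘ σ) k * ‖x‖ ^ 2
      ≤ (star (WithLp.equiv 2 _ x) ⬝ᵥ (C *ᵥ (WithLp.equiv 2 _ x))).re := by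
    rw [quad_eq C hC x, norm_sq_eq x bC, Finset.mul_sum]
    refine Finset.sum_le_sum fun j _ => ?_
    by_cases hj : j ∈ sC
    · obtain ⟨m, hm, rfl⟩ := Finset.mem_image.mp hj
      have : (hC.eigenvalues ∘ σ) k ≤ hC.eigenvalues (σ m) :=
        Tuple.monotone_sort hC.eigenvalues (Finset.mem_Ici.mp hm)
      exact mul_le_mul_of_nonneg_right this (by positivity)
    · rw [repr_support bC sC x hxS hj]
      simp
  -- upper bound for A
  have hAineq : (star (WithLp.equiv 2 _ x) ⬝ᵥ (A *ᵥ (WithLp.equiv 2 _ x))).re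
      ≤ (hA.eigenvalues ∘ τ) k * ‖x‖ ^ 2 := by
    rw [quad_eq A hA x, norm_sq_eq x bA, Finset.mul_sum]
    refine Finset.sum_le_sum fun j _ => ?_
    by_cases hj : j ∈ sA
    · obtain ⟨m, hm, rfl⟩ := Finset.mem_image.mp hj
      have : hA.eigenvalues (τ m) ≤ (hA.eigenvalues ∘ τ) k :=
        Tuple.monotone_sort hA.eigenvalues (Finset.mem_Iic.mp hm)
      exact mul_le_mul_of_nonneg_right this (by positivity)
    · rw [repr_support bA sA x hxT hj]
      simp
  -- strict middle inequality
  have hx0' : (WithLp.equiv 2 (Fin n → ℂ)) x ≠ 0 := by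
    intro hcon
    exact hx0 ((WithLp.equiv 2 (Fin n → ℂ)).injective (by simpa using hcon))
  have hmid := h.dotProduct_mulVec_pos hx0'
  rw [sub_mulVec, dotProduct_sub] at hmid
  have hre : (star (WithLp.equiv 2 _ x) ⬝ᵥ (C *ᵥ (WithLp.equiv 2 _ x))).re
      < (star (WithLp.equiv 2 _ x) ⬝ᵥ (A *ᵥ (WithLp.equiv 2 _ x))).re := by
    have := (Complex.lt_def.mp hmid).1
    simp only [Complex.sub_re, Complex.zero_re] at this
    linarith
  have := lt_of_le_of_lt hCineq (lt_of_lt_of_le hre hAineq)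
  exact lt_of_mul_lt_mul_right (by simpa using this) (le_of_lt hnorm) |>.trans_le le_rfl


noncomputable def sortedEig {M : Matrix (Fin n) (Fin n) ℂ} (hM : M.IsHermitian) : Fin n → ℝ :=
  hM.eigenvalues ∘ Tuple.sort hM.eigenvalues

lemma sortedEig_congr {M N : Matrix (Fin n) (Fin n) ℂ} (h : M = N)
    (hM : M.IsHermitian) (hN : N.IsHermitian) : sortedEig hM = sortedEig hN := by
  subst h; rfl


lemma sorted_eig_lt' {A C : Matrix (Fin n) (Fin n) ℂ} (hA : A.IsHermitian) (hC : C.IsHermitian)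
    (h : (A - C).PosDef) (k : Fin n) : sortedEig hC k < sortedEig hA k :=
  sorted_eig_lt hA hC h k

open scoped MatrixOrder in
lemma matAbs_self {A : Matrix (Fin n) (Fin n) ℂ} (hA : A.IsHermitian) (hApos : A.PosSemidef) :
    matAbs A = A := by
  have hM := Matrix.posSemidef_conjTranspose_mul_self A
  have h1 : matAbs A = cfc Real.sqrt (Aᴴ * A) := by
    rw [hM.1.cfc_eq]
    unfold matAbs Matrix.PosSemidef.sqrt
    simp [Matrix.IsHermitian.cfc, Function.comp_def]
  have h0 : (0 : Matrix (Fin n) (Fin n) ℂ) ≤ Aᴴ * A := Matrix.nonneg_iff_posSemidef.mpr hM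
  rw [h1, ← cfcₙ_eq_cfc, ← CFC.sqrt_eq_real_sqrt _ h0,
    CFC.sqrt_eq_iff _ _ h0 (Matrix.nonneg_iff_posSemidef.mpr hApos), hA.eq]

end SingValsAux

open SingValsAux Matrix in
/-- If `A`, `B` are Hermitian and `A − |B|` is positive definite, then every singular value of
`A` strictly dominates the corresponding singular value of `B`; equivalently
`Σ↑(A) − Σ↑(B)` is positive definite. -/
theorem singVals_strict_mono (n : ℕ) (hn : 1 ≤ n)
    (A B : Matrix (Fin n) (Fin n) ℂ) (hA : A.IsHermitian) (hB : B.IsHermitian)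
    (h : (A - matAbs B).PosDef) :
    (∀ k : Fin n, singVals B k < singVals A k) ∧ (SigmaUp A - SigmaUp B).PosDef := by
  have habsB : (matAbs B).PosSemidef := (Matrix.posSemidef_conjTranspose_mul_self B).posSemidef_sqrt
  have hApos : A.PosDef := by
    have := h.add_posSemidef habsB
    simpa using this
  have habsA : matAbs A = A := by
    exact matAbs_self hA hApos.posSemidef
  have hSA : ∀ k : Fin n, singVals A k = sortedEig hA k.rev := by
    intro k
    show sortedEig (Matrix.posSemidef_conjTranspose_mul_self A).posSemidef_sqrt.1 k.rev = _
    exact congrFun (sortedEig_congr habsA _ hA) k.rev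
  have hSB : ∀ k : Fin n, singVals B k = sortedEig habsB.1 k.rev := fun k => rfl
  have key : ∀ k : Fin n, singVals B k < singVals A k := by
    intro k
    rw [hSA, hSB]
    exact sorted_eig_lt' hA habsB.1 h k.rev
  refine ⟨key, ?_⟩
  rw [SigmaUp, SigmaUp,
    show ((Matrix.diagonal fun k => (singVals A k : ℂ)) - Matrix.diagonal fun k => (singVals B k : ℂ))
      = Matrix.diagonal fun k => ((singVals A k : ℂ) - singVals B k) from
        Matrix.diagonal_sub _ _]
  refine Matrix.PosDef.diagonal fun k => ?_
  rw [← Complex.ofReal_sub]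
  rw [Complex.zero_lt_real]
  exact sub_pos.mpr (key k)
end
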